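/- Let (M, d) be a complete metric space and J : M → ℝ ∪ {+∞} proper, lower semicontinuous, bounded below, with ū a minimizer of J. Fix γ > 0. Suppose there exists δ ∈ (0, +∞] such that for every Lipschitz ζ : M → ℝ with Lip ζ < γ, argmin(J + ζ) ∩ B(ū, δ) ⊆ {ū}. Then for every γ′ < γ, J(u) ≥ J(ū) + γ′·d(u, ū) for all u ∈ B(ū, δ/2); in particular, ū is a sharp local minimizer with parameters δ/2 and γ. -/

import Mathlib

open Filter Topology

lemma ekeland_real {M : Type*} [MetricSpace M] [CompleteSpace M]
    (f : M → ℝ) (hlsc : LowerSemicontinuous f) (c : ℝ) (hc : ∀ w, c ≤ f w)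
    (α : ℝ) (hα : 0 < α) (u : M) :
    ∃ v : M, f v + α * dist v u ≤ f u ∧ ∀ w, f v ≤ f w + α * dist v w := by
  classical
  set S : M → Set M := fun x => {w | f w + α * dist w x ≤ f x} with hS
  have hxS : ∀ x, x ∈ S x := by
    intro x; simp [hS]
  have hSne : ∀ x, (f '' S x).Nonempty := fun x => ⟨f x, x, hxS x, rfl⟩
  have hSbdd : ∀ x, BddBelow (f '' S x) := by
    rintro x; exact ⟨c, by rintro r ⟨y, _, rfl⟩; exact hc y⟩
  set m : M → ℝ := fun x => sInf (f '' S x) with hmdef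
  have hm_le : ∀ x, m x ≤ f x := fun x => csInf_le (hSbdd x) ⟨x, hxS x, rfl⟩
  have hm_lb : ∀ x, ∀ w ∈ S x, m x ≤ f w := fun x w hw => csInf_le (hSbdd x) ⟨w, hw, rfl⟩
  have hnext : ∀ x, ∃ y, y ∈ S x ∧ f y ≤ (f x + m x)/2 := by
    intro x
    rcases lt_or_eq_of_le (hm_le x) with h | h
    · have hmid : m x < (f x + m x)/2 := by linarith
      obtain ⟨r, ⟨y, hy, rfl⟩, hr⟩ := exists_lt_of_csInf_lt (hSne x) hmid
      exact ⟨y, hy, hr.le⟩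
    · exact ⟨x, hxS x, by rw [← h]; linarith [hm_le x]⟩
  choose next hnextS hnextle using hnext
  set v : ℕ → M := fun n => Nat.rec u (fun _ x => next x) n with hv
  have hv0 : v 0 = u := rfl
  have hvs : ∀ n, v (n+1) = next (v n) := fun n => rfl
  have hstep : ∀ n, f (v (n+1)) + α * dist (v (n+1)) (v n) ≤ f (v n) := by
    intro n; rw [hvs n]; exact hnextS (v n)
  have hanti : ∀ n, f (v (n+1)) ≤ f (v n) := by
    intro n
    have := hstep n
    nlinarith [dist_nonneg (x := v (n+1)) (y := v n)]
  have hantitone : Antitone (fun n => f (v n)) := antitone_nat_of_succ_le hanti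
  -- summability of the distances
  have hsum : Summable (fun n => dist (v n) (v (n+1))) := by
    apply summable_of_sum_range_le (c := (f u - c)/α) (fun n => dist_nonneg)
    intro n
    have hsumle : ∑ i ∈ Finset.range n, dist (v i) (v (i+1))
        ≤ ∑ i ∈ Finset.range n, (f (v i) - f (v (i+1)))/α := by
      apply Finset.sum_le_sum
      intro i _
      have := hstep i
      rw [dist_comm]
      rw [le_div_iff₀ hα]
      linarith
    have htel : ∑ i ∈ Finset.range n, (f (v i) - f (v (i+1)))/α
        = (f (v 0) - f (v n))/α := by
      rw [← Finset.sum_div, Finset.sum_range_sub' (fun i => f (v i))]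
    rw [htel] at hsumle
    refine hsumle.trans ?_
    rw [hv0]
    have := hc (v n)
    gcongr
  have hcauchy : CauchySeq v := cauchySeq_of_summable_dist hsum
  obtain ⟨p, hp⟩ := cauchySeq_tendsto_of_complete hcauchy
  -- S is decreasing along the sequence
  have hSS : ∀ x, S (next x) ⊆ S x := by
    intro x w hw
    have h1 : f w + α * dist w (next x) ≤ f (next x) := hw
    have h2 : f (next x) + α * dist (next x) x ≤ f x := hnextS x
    have htri := dist_triangle w (next x) x
    have h3 : α * dist w x ≤ α * dist w (next x) + α * dist (next x) x := by
      rw [← mul_add]; exact mul_le_mul_of_nonneg_left htri hα.le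
    have : f w + α * dist w x ≤ f x := by linarith
    exact this
  have hSsub : ∀ n k, S (v (n + k)) ⊆ S (v n) := by
    intro n k
    induction k with
    | zero => exact fun w hw => hw
    | succ k ih =>
        refine subset_trans ?_ ih
        rw [show n + (k+1) = (n+k) + 1 from rfl, hvs (n+k)]
        exact hSS (v (n+k))
  have hvmem : ∀ n k, v (n + k) ∈ S (v n) := fun n k => hSsub n k (hxS (v (n+k)))
  -- S x is closed
  have hSclosed : ∀ x, IsClosed (S x) := by
    intro x
    have hg : LowerSemicontinuous (fun w => f w + α * dist w x) :=
      hlsc.add (Continuous.lowerSemicontinuous (by continuity))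
    have : S x = ((fun w => f w + α * dist w x) ⁻¹' Set.Ioi (f x))ᶜ := by
      ext w; simp [hS, not_lt]
    rw [this]
    exact (lowerSemicontinuous_iff_isOpen_preimage.1 hg (f x)).isClosed_compl
  have hpS : ∀ n, p ∈ S (v n) := by
    intro n
    refine (hSclosed (v n)).mem_of_tendsto (hp.comp (tendsto_add_atTop_nat n)) ?_
    exact Filter.Eventually.of_forall (fun k => by
      simpa [Nat.add_comm n k] using hvmem n k)
  -- limit of f (v n)
  set L : ℝ := ⨅ n, f (v n) with hL
  have hbdd : BddBelow (Set.range fun n => f (v n)) := ⟨c, by rintro r ⟨n, rfl⟩; exact hc (v n)⟩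
  have hfL : Tendsto (fun n => f (v n)) atTop (nhds L) := tendsto_atTop_ciInf hantitone hbdd
  have hpvn : ∀ n, f p ≤ f (v n) := by
    intro n
    have := hpS n
    have h1 : f p + α * dist p (v n) ≤ f (v n) := this
    nlinarith [dist_nonneg (x := p) (y := v n)]
  have hpL : f p ≤ L := le_ciInf hpvn
  refine ⟨p, ?_, ?_⟩
  · have := hpS 0
    rw [hv0] at this
    exact this
  · intro w
    by_contra hcon
    push_neg at hcon
    have hwS : ∀ n, w ∈ S (v n) := by
      intro n
      have h1 : f p + α * dist p (v n) ≤ f (v n) := hpS n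
      have htr := dist_triangle w p (v n)
      have h3 : α * dist w (v n) ≤ α * dist w p + α * dist p (v n) := by
        rw [← mul_add]; exact mul_le_mul_of_nonneg_left htr hα.le
      have hdw : α * dist w p = α * dist p w := by rw [dist_comm]
      have : f w + α * dist w (v n) ≤ f (v n) := by linarith
      exact this
    have hwm : ∀ n, m (v n) ≤ f w := fun n => hm_lb (v n) w (hwS n)
    have hmlow : ∀ n, 2 * f (v (n+1)) - f (v n) ≤ f w := by
      intro n
      have ha := hnextle (v n)
      rw [← hvs n] at ha
      have hb := hwm n
      linarith
    have hLfw : L ≤ f w := by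
      have ht : Tendsto (fun n => 2 * f (v (n+1)) - f (v n)) atTop (nhds (2*L - L)) := by
        exact ((hfL.comp (tendsto_add_atTop_nat 1)).const_mul 2).sub hfL
      have : L ≤ f w := by
        have := le_of_tendsto ht (Filter.Eventually.of_forall hmlow)
        linarith
      exact this
    nlinarith [dist_nonneg (x := p) (y := w)]

lemma ekeland_ereal {M : Type*} [MetricSpace M] [CompleteSpace M]
    (J : M → EReal) (hlsc : LowerSemicontinuous J) (c : ℝ) (hc : ∀ w, ((c:ℝ):EReal) ≤ J w)
    (α : ℝ) (hα : 0 < α) (u : M) (hu : J u ≠ ⊤) :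
    ∃ v, J v + ((α * dist v u : ℝ) : EReal) ≤ J u ∧
      ∀ w, J v ≤ J w + ((α * dist v w : ℝ) : EReal) := by
  have hne_bot : ∀ w, min (J w) (J u) ≠ ⊥ := by
    intro w
    have : ((c:ℝ):EReal) ≤ min (J w) (J u) := le_min (hc w) (hc u)
    exact fun h => by simp [h] at this
  have hne_top : ∀ w, min (J w) (J u) ≠ ⊤ :=
    fun w h => hu (top_le_iff.mp (h ▸ min_le_right (J w) (J u)))
  set f : M → ℝ := fun w => (min (J w) (J u)).toReal with hf
  have coe_f : ∀ w, ((f w : ℝ) : EReal) = min (J w) (J u) :=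
    fun w => EReal.coe_toReal (hne_top w) (hne_bot w)
  have hflsc : LowerSemicontinuous f := by
    intro x y hy
    have h1 : ((y:ℝ):EReal) < min (J x) (J u) := by
      rw [← coe_f x]; exact_mod_cast hy
    have h2 : ((y:ℝ):EReal) < J x := h1.trans_le (min_le_left _ _)
    have h3 : ((y:ℝ):EReal) < J u := h1.trans_le (min_le_right _ _)
    filter_upwards [hlsc x _ h2] with w hw
    have : ((y:ℝ):EReal) < min (J w) (J u) := lt_min hw h3
    rw [← coe_f w] at this
    exact_mod_cast this
  have hfc : ∀ w, c ≤ f w := by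
    intro w
    have : ((c:ℝ):EReal) ≤ ((f w : ℝ):EReal) := by
      rw [coe_f w]; exact le_min (hc w) (hc u)
    exact_mod_cast this
  obtain ⟨v, h1, h2⟩ := ekeland_real f hflsc c hfc α hα u
  have hfu : f u = (J u).toReal := by simp [hf]
  have hJvle : J v ≤ J u := by
    by_contra hgt
    push_neg at hgt
    have hmv : min (J v) (J u) = J u := min_eq_right hgt.le
    have hfv : f v = f u := by simp [hf, hmv]
    have hle0 : α * dist v u ≤ 0 := by rw [hfv] at h1; linarith
    have hdle : dist v u ≤ 0 := by nlinarith [dist_nonneg (x := v) (y := u)]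
    have hd0 : v = u := dist_le_zero.mp hdle
    rw [hd0] at hgt
    exact lt_irrefl _ hgt
  have coe_fv : ((f v : ℝ) : EReal) = J v := by
    rw [coe_f v, min_eq_left hJvle]
  have coe_fu : ((f u : ℝ) : EReal) = J u := by
    rw [coe_f u, min_self]
  refine ⟨v, ?_, ?_⟩
  · calc J v + ((α * dist v u : ℝ) : EReal)
        = ((f v + α * dist v u : ℝ) : EReal) := by rw [EReal.coe_add, coe_fv]
      _ ≤ ((f u : ℝ) : EReal) := EReal.coe_le_coe_iff.mpr h1
      _ = J u := coe_fu
  · intro w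
    calc J v = ((f v : ℝ) : EReal) := coe_fv.symm
      _ ≤ ((f w + α * dist v w : ℝ) : EReal) := EReal.coe_le_coe_iff.mpr (h2 w)
      _ = ((f w : ℝ) : EReal) + ((α * dist v w : ℝ) : EReal) := EReal.coe_add _ _
      _ ≤ J w + ((α * dist v w : ℝ) : EReal) := by
          apply add_le_add_left
          rw [coe_f w]; exact min_le_left _ _

/-- in a complete metric space, stability of the minimizer under all
Lipschitz perturbations with constant < γ on a ball B(ū, δ) implies sharp local
minimality: linear growth with any modulus γ′ < γ, and hence with modulus γ, on
the ball B(ū, δ/2). -/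
theorem lipschitz_stability_implies_sharp_local_min
    {M : Type*} [MetricSpace M] [CompleteSpace M]
    (J : M → EReal) (hbot : ∀ u, J u ≠ ⊥) (hproper : ∃ u, J u ≠ ⊤)
    (hlsc : LowerSemicontinuous J) (hbdd : ∃ c : ℝ, ∀ u, ((c : ℝ) : EReal) ≤ J u)
    (ubar : M) (hmin : ∀ v : M, J ubar ≤ J v)
    (γ : ℝ) (hγ : 0 < γ) (δ : ENNReal) (hδ : 0 < δ)
    (hstab : ∀ (ζ : M → ℝ) (K : NNReal), LipschitzWith K ζ → (K : ℝ) < γ →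
      ∀ u ∈ EMetric.closedBall ubar δ,
        (∀ v : M, J u + ((ζ u : ℝ) : EReal) ≤ J v + ((ζ v : ℝ) : EReal)) → u = ubar) :
    (∀ γ' : ℝ, γ' < γ → ∀ u ∈ EMetric.closedBall ubar (δ / 2),
        J ubar + ((γ' * dist u ubar : ℝ) : EReal) ≤ J u) ∧
    (∀ u ∈ EMetric.closedBall ubar (δ / 2),
        J ubar + ((γ * dist u ubar : ℝ) : EReal) ≤ J u) := by
  obtain ⟨c, hc⟩ := hbdd
  obtain ⟨w0, hw0⟩ := hproper
  have hubar_top : J ubar ≠ ⊤ := fun h => hw0 (top_le_iff.mp (h ▸ hmin w0))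
  set a : ℝ := (J ubar).toReal with hadef
  have ha : J ubar = ((a : ℝ) : EReal) := (EReal.coe_toReal hubar_top (hbot ubar)).symm
  have part1 : ∀ γ' : ℝ, γ' < γ → ∀ u ∈ EMetric.closedBall ubar (δ / 2),
      J ubar + ((γ' * dist u ubar : ℝ) : EReal) ≤ J u := by
    intro γ' hγ' u hu
    rcases le_or_gt γ' 0 with hneg | hpos
    · have h1 : γ' * dist u ubar ≤ 0 :=
        mul_nonpos_of_nonpos_of_nonneg hneg dist_nonneg
      calc J ubar + ((γ' * dist u ubar : ℝ) : EReal)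
          = ((a + γ' * dist u ubar : ℝ) : EReal) := by rw [ha, EReal.coe_add]
        _ ≤ ((a : ℝ) : EReal) := EReal.coe_le_coe_iff.mpr (by linarith)
        _ = J ubar := ha.symm
        _ ≤ J u := hmin u
    · by_contra hcon
      push_neg at hcon
      have hutop : J u ≠ ⊤ := by
        intro h
        rw [h, ha, ← EReal.coe_add] at hcon
        exact not_top_lt hcon
      set b : ℝ := (J u).toReal with hbdef
      have hb : J u = ((b : ℝ) : EReal) := (EReal.coe_toReal hutop (hbot u)).symm
      have hab : a ≤ b := by
        have := hmin u
        rw [ha, hb] at this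
        exact_mod_cast this
      have hblt : b < a + γ' * dist u ubar := by
        rw [ha, hb, ← EReal.coe_add] at hcon
        exact_mod_cast hcon
      have hd0 : 0 < dist u ubar := by
        rcases (dist_nonneg (x := u) (y := ubar)).lt_or_eq with h | h
        · exact h
        · rw [← h] at hblt; linarith
      set γ'' : ℝ := (γ' + γ)/2 with hγ''def
      have hγ''1 : γ' < γ'' := by rw [hγ''def]; linarith
      have hγ''2 : γ'' < γ := by rw [hγ''def]; linarith
      have hγ''pos : 0 < γ'' := by linarith
      obtain ⟨v, hv1, hv2⟩ := ekeland_ereal J hlsc c hc γ'' hγ''pos u hutop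
      have hvtop : J v ≠ ⊤ := by
        intro h
        rw [h, hb] at hv1
        have hnb : ((γ'' * dist v u : ℝ) : EReal) ≠ ⊥ := EReal.coe_ne_bot _
        rw [EReal.top_add_of_ne_bot hnb] at hv1
        exact (EReal.coe_ne_top b) (top_le_iff.mp hv1)
      set e : ℝ := (J v).toReal with hedef
      have he : J v = ((e : ℝ) : EReal) := (EReal.coe_toReal hvtop (hbot v)).symm
      have hv1' : e + γ'' * dist v u ≤ b := by
        rw [he, hb, ← EReal.coe_add] at hv1
        exact_mod_cast hv1
      have hae : a ≤ e := by
        have := hmin v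
        rw [ha, he] at this
        exact_mod_cast this
      have hdvu : dist v u < dist u ubar := by nlinarith
      have hmem : v ∈ EMetric.closedBall ubar δ := by
        change edist v ubar ≤ δ
        have h3 : edist u ubar ≤ δ / 2 := EMetric.mem_closedBall.mp hu
        have h2 : edist v u ≤ δ / 2 := by
          calc edist v u = ENNReal.ofReal (dist v u) := edist_dist v u
            _ ≤ ENNReal.ofReal (dist u ubar) := ENNReal.ofReal_le_ofReal hdvu.le
            _ = edist u ubar := (edist_dist u ubar).symm
            _ ≤ δ / 2 := h3
        calc edist v ubar ≤ edist v u + edist u ubar := edist_triangle v u ubar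
          _ ≤ δ / 2 + δ / 2 := add_le_add h2 h3
          _ = δ := ENNReal.add_halves δ
      set ζ : M → ℝ := fun w => γ'' * dist w v with hζdef
      set K : NNReal := ⟨γ'', hγ''pos.le⟩ with hKdef
      have hlip : LipschitzWith K ζ := by
        apply LipschitzWith.of_dist_le_mul
        intro x y
        rw [hζdef]
        simp only [Real.dist_eq, ← mul_sub, abs_mul, abs_of_nonneg hγ''pos.le]
        have : |dist x v - dist y v| ≤ dist x y := abs_dist_sub_le x y v
        calc γ'' * |dist x v - dist y v| ≤ γ'' * dist x y :=
              mul_le_mul_of_nonneg_left this hγ''pos.le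
          _ = (K : ℝ) * dist x y := rfl
      have hKlt : (K : ℝ) < γ := by rw [hKdef]; exact hγ''2
      have hminsol : ∀ w : M, J v + ((ζ v : ℝ) : EReal) ≤ J w + ((ζ w : ℝ) : EReal) := by
        intro w
        have hζv : ζ v = 0 := by simp [hζdef]
        rw [hζv]
        simp only [EReal.coe_zero, add_zero]
        have := hv2 w
        rw [dist_comm v w] at this
        exact this
      have heq : v = ubar := hstab ζ K hlip hKlt v hmem hminsol
      rw [heq] at he
      have hea : e = a := by
        rw [ha] at he
        exact_mod_cast he.symm
      rw [heq] at hv1'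
      rw [dist_comm ubar u] at hv1'
      nlinarith
  refine ⟨part1, ?_⟩
  intro u hu
  rcases (dist_nonneg (x := u) (y := ubar)).lt_or_eq with hd | hd
  · rcases eq_or_ne (J u) ⊤ with htop | htop
    · rw [htop]; exact le_top
    · set b : ℝ := (J u).toReal with hbdef
      have hb : J u = ((b : ℝ) : EReal) := (EReal.coe_toReal htop (hbot u)).symm
      rw [ha, hb, ← EReal.coe_add, EReal.coe_le_coe_iff]
      by_contra hcon
      push_neg at hcon
      have h1 : (b - a) / dist u ubar < γ := by
        rw [div_lt_iff₀ hd]; linarith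
      obtain ⟨γ', hγ'1, hγ'2⟩ := exists_between h1
      have := part1 γ' hγ'2 u hu
      rw [ha, hb, ← EReal.coe_add, EReal.coe_le_coe_iff] at this
      have h2 : b - a < γ' * dist u ubar := by
        rw [div_lt_iff₀ hd] at hγ'1; linarith
      linarith
  · have huu : u = ubar := dist_eq_zero.mp hd.symm
    rw [huu, dist_self, mul_zero]
    simp
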